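/- arXiv:1604.05419 — 3 statements merged into one kernel-verified Lean document; each statement's English description precedes it below -/
import Mathlib

section
/- For a combinator ⊕ on total preorders over finite W, the Parity condition ⊕PAR (if x ≺₁⊕₂ y then for each i ∈ {1,2} there exists z with x ∼₁⊕₂ z and z ≺ᵢ y) is equivalent to the strong-belief condition ⊕SB: for all S ⊆ W, if x ≺₁⊕₂ y for every x ∈ Sᶜ and y ∈ S, then min(≼₁, S) ∪ min(≼₂, S) ⊆ min(≼₁⊕₂, S). -/
def Tpo {W : Type*} (R : W → W → Prop) : Prop :=
  (∀ x, R x x) ∧ (∀ x y z, R x y → R y z → R x z) ∧ (∀ x y, R x y ∨ R y x)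

def strictP {W : Type*} (R : W → W → Prop) (x y : W) : Prop := R x y ∧ ¬ R y x

def symmP {W : Type*} (R : W → W → Prop) (x y : W) : Prop := R x y ∧ R y x

def minSet {W : Type*} (R : W → W → Prop) (S : Set W) : Set W := {x | x ∈ S ∧ ∀ y ∈ S, R x y}

def SVariants {W : Type*} (R1 R2 : W → W → Prop) (S : Set W) : Prop :=
  ∀ x y, ((x ∈ S ∧ y ∈ S) ∨ (x ∉ S ∧ y ∉ S)) → (R1 x y ↔ R2 x y)

lemma tpo_finset_min {W : Type*} {R : W → W → Prop} (hR : Tpo R) :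
    ∀ s : Finset W, s.Nonempty → ∃ m ∈ s, ∀ y ∈ s, R m y := by
  classical
  intro s
  induction s using Finset.induction_on with
  | empty => intro h; exact absurd h (by simp)
  | @insert a s hx ih =>
    intro _
    rcases s.eq_empty_or_nonempty with rfl | hs
    · exact ⟨a, by simp, by simp [hR.1]⟩
    · obtain ⟨m, hm, hmin⟩ := ih hs
      rcases hR.2.2 a m with h | h
      · refine ⟨a, Finset.mem_insert_self _ _, ?_⟩
        intro y hy
        rcases Finset.mem_insert.mp hy with rfl | hy
        · exact hR.1 y
        · exact hR.2.1 _ _ _ h (hmin y hy)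
      · refine ⟨m, Finset.mem_insert_of_mem hm, ?_⟩
        intro y hy
        rcases Finset.mem_insert.mp hy with rfl | hy
        · exact h
        · exact hmin y hy

lemma tpo_set_min {W : Type*} [Fintype W] {R : W → W → Prop} (hR : Tpo R)
    {S : Set W} (hS : S.Nonempty) : ∃ m, m ∈ minSet R S := by
  classical
  obtain ⟨m, hm, hmin⟩ := tpo_finset_min hR S.toFinset (by simpa using hS)
  exact ⟨m, by simpa using hm, fun y hy => hmin y (by simpa using hy)⟩

theorem stmt9 {W : Type*} [Fintype W] [Nonempty W]
    (C : (W → W → Prop) → (W → W → Prop) → (W → W → Prop))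
    (hC : ∀ R1 R2, Tpo R1 → Tpo R2 → Tpo (C R1 R2)) :
    (∀ R1 R2, Tpo R1 → Tpo R2 → ∀ x y : W, strictP (C R1 R2) x y →
        (∃ z, symmP (C R1 R2) x z ∧ strictP R1 z y) ∧
        (∃ z, symmP (C R1 R2) x z ∧ strictP R2 z y))
    ↔ (∀ R1 R2, Tpo R1 → Tpo R2 → ∀ S : Set W,
        (∀ x ∈ Sᶜ, ∀ y ∈ S, strictP (C R1 R2) x y) →
          minSet R1 S ∪ minSet R2 S ⊆ minSet (C R1 R2) S) := by
  constructor
  · -- PAR → SB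
    intro hpar R1 R2 h1 h2 S hS w hw
    obtain ⟨hCt⟩ : ∃ _ : Tpo (C R1 R2), True := ⟨hC R1 R2 h1 h2, trivial⟩
    have hwS : w ∈ S := by rcases hw with hw | hw <;> exact hw.1
    refine ⟨hwS, fun y hy => ?_⟩
    by_contra hne
    have hstr : strictP (C R1 R2) y w := ⟨(hCt.2.2 y w).resolve_right hne, hne⟩
    obtain ⟨hz1, hz2⟩ := hpar R1 R2 h1 h2 y w hstr
    rcases hw with hw | hw
    · obtain ⟨z, hsym, hzw, hnw⟩ := hz1
      have hzS : z ∉ S := fun hzS => hnw (hw.2 z hzS)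
      exact (hS z hzS y hy).2 hsym.1
    · obtain ⟨z, hsym, hzw, hnw⟩ := hz2
      have hzS : z ∉ S := fun hzS => hnw (hw.2 z hzS)
      exact (hS z hzS y hy).2 hsym.1
  · -- SB → PAR
    intro hsb R1 R2 h1 h2 x y hxy
    have hCt := hC R1 R2 h1 h2
    set S : Set W := {w | C R1 R2 x w} with hSdef
    have hxS : x ∈ S := hCt.1 x
    have hyS : y ∈ S := hxy.1
    have hHyp : ∀ a ∈ Sᶜ, ∀ b ∈ S, strictP (C R1 R2) a b := by
      intro a ha b hb
      have hax : C R1 R2 a x := (hCt.2.2 x a).resolve_left ha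
      refine ⟨hCt.2.1 _ _ _ hax hb, fun hba => ha ?_⟩
      exact hCt.2.1 _ _ _ hb hba
    have hmin := hsb R1 R2 h1 h2 S hHyp
    have key : ∀ R : W → W → Prop, Tpo R →
        (minSet R S ⊆ minSet (C R1 R2) S) →
        ∃ z, symmP (C R1 R2) x z ∧ strictP R z y := by
      intro R hR hsub
      obtain ⟨m, hm⟩ := tpo_set_min hR (⟨x, hxS⟩ : S.Nonempty)
      have hmC := hsub hm
      have hyn : y ∉ minSet R S := by
        intro hymin
        have := (hsub hymin).2 x hxS
        exact hxy.2 this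
      -- y not R-minimal: some w ∈ S with ¬ R y w
      have : ∃ w ∈ S, ¬ R y w := by
        by_contra h
        push_neg at h
        exact hyn ⟨hyS, h⟩
      obtain ⟨w, hwS, hyw⟩ := this
      refine ⟨m, ⟨hm.1, hmC.2 x hxS⟩, hm.2 y hyS, fun hym => hyw (hR.2.1 _ _ _ hym (hm.2 w hwS))⟩
    refine ⟨key R1 h1 (fun z hz => hmin (Or.inl hz)), key R2 h2 (fun z hz => hmin (Or.inr hz))⟩
end

section
/- The Synchronous TeamQueue combination ⊕_STQ of two total preorders ≼₁, ≼₂ on finite W, defined inductively by T_i = min(≼₁, (T₁ ∪ … ∪ T_{i−1})ᶜ) ∪ min(≼₂, (T₁ ∪ … ∪ T_{i−1})ᶜ) with the combined tpo ranking x below y iff x appears in an earlier cell T_i, satisfies ⊕SPU+: if x ≺₁ y and z ≺₂ y then x ≺_STQ y or z ≺_STQ y. -/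
def STQrest {W : Type*} (R1 R2 : W → W → Prop) : ℕ → Set W
  | 0 => Set.univ
  | n+1 => STQrest R1 R2 n \ (minSet R1 (STQrest R1 R2 n) ∪ minSet R2 (STQrest R1 R2 n))

/-- x is at least as plausible as y in the STQ combination: x's cell index ≤ y's cell index. -/
def STQle {W : Type*} (R1 R2 : W → W → Prop) (x y : W) : Prop :=
  ∀ n, x ∈ STQrest R1 R2 n → y ∈ STQrest R1 R2 n

lemma tpo_min_nonempty {W : Type*} [Fintype W] (R : W → W → Prop) (hR : Tpo R)
    (S : Set W) (hS : S.Nonempty) : (minSet R S).Nonempty := by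
  classical
  obtain ⟨hrefl, htrans, htot⟩ := hR
  have key : ∀ s : Finset W, s.Nonempty → ∃ x ∈ s, ∀ y ∈ s, R x y := by
    intro s
    induction s using Finset.induction_on with
    | empty => intro h; simp at h
    | @insert a t ha ih =>
      intro _
      rcases t.eq_empty_or_nonempty with rfl | ht
      · exact ⟨a, by simp, by simp [hrefl]⟩
      · obtain ⟨x, hx, hmin⟩ := ih ht
        rcases htot x a with h | h
        · refine ⟨x, Finset.mem_insert_of_mem hx, ?_⟩
          intro y hy
          rcases Finset.mem_insert.mp hy with rfl | hy
          · exact h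
          · exact hmin y hy
        · refine ⟨a, Finset.mem_insert_self a t, ?_⟩
          intro y hy
          rcases Finset.mem_insert.mp hy with rfl | hy
          · exact hrefl y
          · exact htrans a x y h (hmin y hy)
  obtain ⟨x, hx, hmin⟩ := key S.toFinset (by simpa [Set.toFinset_nonempty] using hS)
  exact ⟨x, by simpa using hx, fun y hy => hmin y (by simpa using hy)⟩

lemma STQrest_succ_subset {W : Type*} (R1 R2 : W → W → Prop) (n : ℕ) :
    STQrest R1 R2 (n+1) ⊆ STQrest R1 R2 n := Set.diff_subset

lemma STQrest_antitone {W : Type*} (R1 R2 : W → W → Prop) {m n : ℕ} (h : m ≤ n) :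
    STQrest R1 R2 n ⊆ STQrest R1 R2 m := by
  induction n with
  | zero =>
    have : m = 0 := Nat.le_zero.mp h
    subst this; exact subset_rfl
  | succ n ih =>
    rcases Nat.lt_or_ge m (n+1) with h' | h'
    · exact (STQrest_succ_subset R1 R2 n).trans (ih (Nat.lt_succ_iff.mp h'))
    · have : m = n+1 := le_antisymm h h'
      subst this; exact subset_rfl

lemma STQrest_card {W : Type*} [Fintype W] (R1 R2 : W → W → Prop) (h1 : Tpo R1) (n : ℕ) :
    (STQrest R1 R2 n).ncard ≤ Fintype.card W - n := by
  induction n with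
  | zero => simp [STQrest, Set.ncard_univ]
  | succ n ih =>
    rcases (STQrest R1 R2 n).eq_empty_or_nonempty with he | hne
    · have : STQrest R1 R2 (n+1) = ∅ := by
        simp only [STQrest, he]
        simp
      simp [this]
    · obtain ⟨m, hm⟩ := tpo_min_nonempty R1 h1 _ hne
      have hm1 : m ∈ STQrest R1 R2 n := hm.1
      have hm2 : m ∉ STQrest R1 R2 (n+1) := fun hc => hc.2 (Or.inl hm)
      have hsub : STQrest R1 R2 (n+1) ⊂ STQrest R1 R2 n :=
        (Set.ssubset_iff_of_subset Set.diff_subset).mpr ⟨m, hm1, hm2⟩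
      have hlt : (STQrest R1 R2 (n+1)).ncard < (STQrest R1 R2 n).ncard :=
        Set.ncard_lt_ncard hsub (Set.toFinite _)
      omega

theorem stmt11 {W : Type*} [Fintype W] [Nonempty W]
    (R1 R2 : W → W → Prop) (h1 : Tpo R1) (h2 : Tpo R2) :
    ∀ x y z : W, strictP R1 x y → strictP R2 z y →
      strictP (STQle R1 R2) x y ∨ strictP (STQle R1 R2) z y := by
  classical
  intro x y z hxy hzy
  have hleave : ∀ w : W, ∃ n, w ∉ STQrest R1 R2 n := by
    intro w
    refine ⟨Fintype.card W, ?_⟩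
    have hcard := STQrest_card R1 R2 h1 (Fintype.card W)
    have hz : (STQrest R1 R2 (Fintype.card W)).ncard = 0 := by omega
    have hempty : STQrest R1 R2 (Fintype.card W) = ∅ :=
      (Set.ncard_eq_zero (Set.toFinite _)).mp hz
    simp [hempty]
  set N : W → ℕ := fun w => Nat.find (hleave w) with hN
  have hmem : ∀ (w : W) (m : ℕ), w ∈ STQrest R1 R2 m ↔ m < N w := by
    intro w m
    constructor
    · intro hw
      by_contra h
      push_neg at h
      exact Nat.find_spec (hleave w) (STQrest_antitone R1 R2 h hw)
    · intro h
      by_contra hc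
      have hle : N w ≤ m := Nat.find_min' (hleave w) hc
      omega
  have hstrict : ∀ a b : W, N a < N b → strictP (STQle R1 R2) a b := by
    intro a b hab
    constructor
    · intro m hm
      rw [hmem] at hm ⊢; omega
    · intro hc
      have hb : b ∈ STQrest R1 R2 (N a) := (hmem b (N a)).mpr hab
      have := (hmem a (N a)).mp (hc (N a) hb)
      omega
  have hy0 : 0 < N y := (hmem y 0).mp (by simp [STQrest])
  set n := N y - 1 with hn
  have hyn : y ∈ STQrest R1 R2 n := (hmem y n).mpr (by omega)
  have hyn1 : y ∉ STQrest R1 R2 (n+1) := by rw [hmem]; omega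
  have hymin : y ∈ minSet R1 (STQrest R1 R2 n) ∪ minSet R2 (STQrest R1 R2 n) := by
    by_contra h
    exact hyn1 ⟨hyn, h⟩
  rcases hymin with h | h
  · left
    apply hstrict
    have hx : x ∉ STQrest R1 R2 n := fun hc => hxy.2 (h.2 x hc)
    rw [hmem] at hx; omega
  · right
    apply hstrict
    have hzn : z ∉ STQrest R1 R2 n := fun hc => hzy.2 (h.2 z hc)
    rw [hmem] at hzn; omega
end

section
/- The Synchronous TeamQueue combination ⊕_STQ satisfies the Parity property: if x ≺_STQ y then for each i ∈ {1,2} there exists z with x ∼_STQ z and z ≺ᵢ y. -/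
section Aux

set_option linter.unusedSectionVars false

variable {W : Type*} [Fintype W]

lemma finset_min (R : W → W → Prop) (hR : Tpo R) :
    ∀ s : Finset W, s.Nonempty → ∃ m ∈ s, ∀ y ∈ s, R m y := by
  classical
  intro s hs
  induction s using Finset.induction with
  | empty => simp at hs
  | @insert a s ha ih =>
    rcases s.eq_empty_or_nonempty with rfl | hsne
    · exact ⟨a, by simp, by simp [hR.1 a]⟩
    · obtain ⟨m, hm, hmin⟩ := ih hsne
      rcases hR.2.2 m a with h | h
      · refine ⟨m, Finset.mem_insert_of_mem hm, fun y hy => ?_⟩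
        rcases Finset.mem_insert.mp hy with rfl | hy
        · exact h
        · exact hmin y hy
      · refine ⟨a, Finset.mem_insert_self a s, fun y hy => ?_⟩
        rcases Finset.mem_insert.mp hy with rfl | hy
        · exact hR.1 y
        · exact hR.2.1 a m y h (hmin y hy)

lemma minSet_nonempty (R : W → W → Prop) (hR : Tpo R) (S : Set W) (hS : S.Nonempty) :
    (minSet R S).Nonempty := by
  classical
  obtain ⟨m, hm, hmin⟩ := finset_min R hR S.toFinite.toFinset
    (S.toFinite.toFinset_nonempty.mpr hS)
  exact ⟨m, by simpa using hm, fun y hy => hmin y (S.toFinite.mem_toFinset.mpr hy)⟩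

variable (R1 R2 : W → W → Prop)

lemma rest_succ_subset (n : ℕ) : STQrest R1 R2 (n+1) ⊆ STQrest R1 R2 n :=
  Set.diff_subset

lemma rest_mono {m n : ℕ} (h : m ≤ n) : STQrest R1 R2 n ⊆ STQrest R1 R2 m := by
  induction h with
  | refl => exact subset_rfl
  | step _ ih => exact (rest_succ_subset R1 R2 _).trans ih

lemma rest_card (h1 : Tpo R1) (n : ℕ) (hne : (STQrest R1 R2 n).Nonempty) :
    (STQrest R1 R2 (n+1)).ncard < (STQrest R1 R2 n).ncard := by
  obtain ⟨m, hm⟩ := minSet_nonempty R1 h1 _ hne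
  apply Set.ncard_lt_ncard _ (Set.toFinite _)
  refine ⟨rest_succ_subset R1 R2 n, fun hsub => ?_⟩
  exact (hsub hm.1).2 (Or.inl hm)

lemma exists_exit (h1 : Tpo R1) (x : W) :
    ∃ n, x ∈ STQrest R1 R2 n ∧ x ∉ STQrest R1 R2 (n+1) := by
  classical
  have hex : ∃ N, x ∉ STQrest R1 R2 N := by
    by_contra h
    push_neg at h
    have hdec : ∀ n, (STQrest R1 R2 (n+1)).ncard < (STQrest R1 R2 n).ncard :=
      fun n => rest_card R1 R2 h1 n ⟨x, h n⟩
    have key : ∀ n, (STQrest R1 R2 n).ncard + n ≤ (STQrest R1 R2 0).ncard := by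
      intro n
      induction n with
      | zero => simp
      | succ n ih => have := hdec n; omega
    have := key ((STQrest R1 R2 0).ncard + 1)
    omega
  have hNspec := Nat.find_spec hex
  have hNpos : Nat.find hex ≠ 0 := by
    intro h0
    rw [h0] at hNspec
    exact hNspec (Set.mem_univ x)
  obtain ⟨n, hn⟩ := Nat.exists_eq_succ_of_ne_zero hNpos
  refine ⟨n, ?_, by rw [hn] at hNspec; exact hNspec⟩
  by_contra hmem
  exact Nat.find_min hex (show n < Nat.find hex by omega) hmem

lemma le_iff_exit (h1 : Tpo R1) {x y : W} {nx ny : ℕ}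
    (hx : x ∈ STQrest R1 R2 nx ∧ x ∉ STQrest R1 R2 (nx+1))
    (hy : y ∈ STQrest R1 R2 ny ∧ y ∉ STQrest R1 R2 (ny+1)) :
    STQle R1 R2 x y ↔ nx ≤ ny := by
  constructor
  · intro h
    by_contra hlt
    push_neg at hlt
    exact hy.2 (rest_mono R1 R2 (by omega) (h nx hx.1))
  · intro hle n hxn
    have hn : n ≤ nx := by
      by_contra hgt
      exact hx.2 (rest_mono R1 R2 (by omega) hxn)
    exact rest_mono R1 R2 (hn.trans hle) hy.1

lemma main_half (h1 : Tpo R1) {x y : W} (hxy : strictP (STQle R1 R2) x y) :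
    ∃ z, symmP (STQle R1 R2) x z ∧ strictP R1 z y := by
  obtain ⟨nx, hx⟩ := exists_exit R1 R2 h1 x
  obtain ⟨ny, hy⟩ := exists_exit R1 R2 h1 y
  have hle : nx ≤ ny := (le_iff_exit R1 R2 h1 hx hy).mp hxy.1
  have hlt : nx < ny := lt_of_le_of_ne hle
    (fun h => hxy.2 ((le_iff_exit R1 R2 h1 hy hx).mpr (le_of_eq h.symm)))
  have hy1 : y ∈ STQrest R1 R2 (nx+1) := rest_mono R1 R2 (by omega) hy.1
  have hy0 : y ∈ STQrest R1 R2 nx := rest_succ_subset R1 R2 nx hy1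
  obtain ⟨z, hz⟩ := minSet_nonempty R1 h1 (STQrest R1 R2 nx) ⟨y, hy0⟩
  have hzexit : z ∈ STQrest R1 R2 nx ∧ z ∉ STQrest R1 R2 (nx+1) :=
    ⟨hz.1, fun hmem => hmem.2 (Or.inl hz)⟩
  refine ⟨z, ⟨(le_iff_exit R1 R2 h1 hx hzexit).mpr le_rfl,
    (le_iff_exit R1 R2 h1 hzexit hx).mpr le_rfl⟩, hz.2 y hy0, fun hyz => ?_⟩
  exact hy1.2 (Or.inl ⟨hy0, fun w hw => h1.2.1 y z w hyz (hz.2 w hw)⟩)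

end Aux

theorem stmt12 {W : Type*} [Fintype W] [Nonempty W]
    (R1 R2 : W → W → Prop) (h1 : Tpo R1) (h2 : Tpo R2) :
    ∀ x y : W, strictP (STQle R1 R2) x y →
      (∃ z, symmP (STQle R1 R2) x z ∧ strictP R1 z y) ∧
      (∃ z, symmP (STQle R1 R2) x z ∧ strictP R2 z y) := by
  intro x y hxy
  constructor
  · exact main_half R1 R2 h1 hxy
  · -- symmetric: STQrest R1 R2 = STQrest R2 R1 by union comm
    have hswap : ∀ n, STQrest R1 R2 n = STQrest R2 R1 n := by
      intro n
      induction n with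
      | zero => rfl
      | succ n ih => simp [STQrest, ih, Set.union_comm]
    have hle : ∀ a b : W, STQle R1 R2 a b ↔ STQle R2 R1 a b := by
      intro a b
      constructor
      · intro h n
        rw [← hswap n]; exact h n
      · intro h n
        rw [hswap n]; exact h n
    obtain ⟨z, hz1, hz2⟩ := main_half R2 R1 h2
      (x := x) (y := y) ⟨(hle x y).mp hxy.1, fun h => hxy.2 ((hle y x).mpr h)⟩
    exact ⟨z, ⟨(hle x z).mpr hz1.1, (hle z x).mpr hz1.2⟩, hz2⟩
end
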